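/- arXiv:2603.22795 — 2 statements merged into one kernel-verified Lean document; each statement's English description precedes it below -/
import Mathlib

section
/- Generalized Fano inequality: Let W be a random variable taking values in {0,1}^k and let v ∈ {0,1}^k be a fixed vector such that E[d_H(W, v)] ≤ ε·k for some 0 ≤ ε ≤ 1/2, where d_H denotes Hamming distance. Then the Shannon entropy of W satisfies H(W) ≤ k · H₂(ε), where H₂(ε) = -ε log₂ ε - (1-ε) log₂(1-ε) is the binary entropy function. -/
open Finset

variable {Ω : Type*} [Fintype Ω]

/-- Distribution of a random variable `X` with respect to probability weights `p`. -/
noncomputable def distOf {S : Type*} [DecidableEq S] (p : Ω → ℝ) (X : Ω → S) (s : S) : ℝ :=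
  ∑ ω, if X ω = s then p ω else 0

/-- Shannon entropy (in bits) of a distribution on a finite type,
with the convention `0 · log 0 = 0`. -/
noncomputable def H' {S : Type*} [Fintype S] (d : S → ℝ) : ℝ :=
  -∑ s, d s * Real.logb 2 (d s)

/-- Shannon entropy (in bits) of a random variable. -/
noncomputable def entropyOf {S : Type*} [Fintype S] [DecidableEq S]
    (p : Ω → ℝ) (X : Ω → S) : ℝ :=
  H' (distOf p X)

/-- Joint distribution of two random variables. -/
noncomputable def jointOf {S T : Type*} [DecidableEq S] [DecidableEq T]
    (p : Ω → ℝ) (X : Ω → S) (Y : Ω → T) (s : S) (t : T) : ℝ :=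
  ∑ ω, if X ω = s ∧ Y ω = t then p ω else 0

/-- Conditional entropy `H(X | Y) = E_{y ∼ Y}[H(X | Y = y)]`. -/
noncomputable def condEntropyOf {S T : Type*} [Fintype S] [Fintype T]
    [DecidableEq S] [DecidableEq T] (p : Ω → ℝ) (X : Ω → S) (Y : Ω → T) : ℝ :=
  ∑ t, distOf p Y t *
    H' (fun s => if distOf p Y t = 0 then 0 else jointOf p X Y s t / distOf p Y t)

/-- Mutual information `I(X; Y) = H(X) - H(X | Y)`. -/
noncomputable def mutualInfoOf {S T : Type*} [Fintype S] [Fintype T]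
    [DecidableEq S] [DecidableEq T] (p : Ω → ℝ) (X : Ω → S) (Y : Ω → T) : ℝ :=
  entropyOf p X - condEntropyOf p X Y

/-- The binary entropy function `H₂(x) = -x log₂ x - (1-x) log₂ (1-x)`,
with `H₂(0) = H₂(1) = 0`. -/
noncomputable def binEnt (x : ℝ) : ℝ :=
  -(x * Real.logb 2 x) - (1 - x) * Real.logb 2 (1 - x)

lemma perTerm {d q : ℝ} (hd : 0 ≤ d) (hq : 0 < q) :
    d * Real.logb 2 q - d * Real.logb 2 d ≤ (q - d) / Real.log 2 := by
  have h2 : (0:ℝ) < Real.log 2 := Real.log_pos (by norm_num)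
  rcases eq_or_lt_of_le hd with h | h
  · rw [← h]
    simp
    positivity
  · have key : Real.log (q / d) ≤ q / d - 1 := Real.log_le_sub_one_of_pos (by positivity)
    have hlb : Real.logb 2 q - Real.logb 2 d = Real.log (q / d) / Real.log 2 := by
      rw [Real.log_div (ne_of_gt hq) (ne_of_gt h)]
      simp [Real.logb]
      ring
    have : d * Real.logb 2 q - d * Real.logb 2 d = d * (Real.log (q / d) / Real.log 2) := by
      rw [← hlb]; ring
    rw [this]
    have h1 : d * (Real.log (q / d) / Real.log 2) ≤ d * ((q / d - 1) / Real.log 2) := by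
      gcongr
    refine h1.trans (le_of_eq ?_)
    field_simp

lemma gibbs {S : Type*} [Fintype S] (d q : S → ℝ) (hd : ∀ s, 0 ≤ d s)
    (hd1 : ∑ s, d s = 1) (hq : ∀ s, 0 < q s) (hq1 : ∑ s, q s ≤ 1) :
    H' d ≤ -∑ s, d s * Real.logb 2 (q s) := by
  have h2 : (0:ℝ) < Real.log 2 := Real.log_pos (by norm_num)
  have key : ∑ s, (d s * Real.logb 2 (q s) - d s * Real.logb 2 (d s))
      ≤ ∑ s, (q s - d s) / Real.log 2 :=
    Finset.sum_le_sum fun s _ => perTerm (hd s) (hq s)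
  have h3 : ∑ s, (q s - d s) / Real.log 2 = (∑ s, q s - 1) / Real.log 2 := by
    rw [← Finset.sum_div, Finset.sum_sub_distrib, hd1]
  have h4 : (∑ s, q s - 1) / Real.log 2 ≤ 0 :=
    div_nonpos_of_nonpos_of_nonneg (by linarith) h2.le
  rw [Finset.sum_sub_distrib, h3] at key
  simp only [H']
  linarith

lemma expect_eq {Ω : Type*} [Fintype Ω] {S : Type*} [Fintype S] [DecidableEq S]
    (p : Ω → ℝ) (W : Ω → S) (g : S → ℝ) :
    ∑ s, distOf p W s * g s = ∑ ω, p ω * g (W ω) := by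
  simp only [distOf, Finset.sum_mul, ite_mul, zero_mul]
  rw [Finset.sum_comm]
  refine Finset.sum_congr rfl fun ω _ => ?_
  simp [Finset.sum_ite_eq]

theorem stmt3' (k : ℕ) {Ω : Type*} [Fintype Ω] (p : Ω → ℝ) (hp : ∀ ω, 0 ≤ p ω) (hsum : ∑ ω, p ω = 1)
    (W : Ω → (Fin k → Bool)) (v : Fin k → Bool) (ε : ℝ)
    (hε0 : 0 ≤ ε) (hεhalf : ε ≤ 1 / 2)
    (hdist : ∑ ω, p ω * (hammingDist (W ω) v : ℝ) ≤ ε * k) :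
    entropyOf p W ≤ k * binEnt ε := by
  have hdnn : ∀ s, 0 ≤ distOf p W s := fun s =>
    Finset.sum_nonneg fun ω _ => by split_ifs <;> simp [hp ω]
  have hd1 : ∑ s, distOf p W s = 1 := by
    have h := expect_eq p W (fun _ => (1:ℝ))
    simpa [hsum] using h
  rcases eq_or_lt_of_le hε0 with hε | hε
  · -- ε = 0 case
    have hε' : ε = 0 := hε.symm
    subst hε'
    have hnn : ∀ ω ∈ Finset.univ, (0:ℝ) ≤ p ω * (hammingDist (W ω) v : ℝ) :=
      fun ω _ => mul_nonneg (hp ω) (Nat.cast_nonneg _)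
    have hzero : ∀ ω ∈ Finset.univ, p ω * (hammingDist (W ω) v : ℝ) = 0 :=
      (Finset.sum_eq_zero_iff_of_nonneg hnn).mp
        (le_antisymm (by simpa using hdist) (Finset.sum_nonneg hnn))
    have hdx : ∀ s : Fin k → Bool, s ≠ v → distOf p W s = 0 := by
      intro s hs
      refine Finset.sum_eq_zero fun ω _ => ?_
      by_cases h : W ω = s
      · have hd0 : (0:ℝ) < (hammingDist (W ω) v : ℝ) := by
          have : hammingDist (W ω) v ≠ 0 :=
            fun h0 => hs (by rw [← h]; exact eq_of_hammingDist_eq_zero h0)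
          exact_mod_cast Nat.pos_of_ne_zero this
        have := hzero ω (Finset.mem_univ ω)
        have hpω : p ω = 0 := by
          rcases mul_eq_zero.mp this with h' | h'
          · exact h'
          · exact absurd h' (ne_of_gt hd0)
        simp [h, hpω]
      · simp [h]
    have hdv : distOf p W v = 1 := by
      rw [← hd1, eq_comm]
      exact Finset.sum_eq_single v (fun s _ hs => hdx s hs) (fun h => absurd (Finset.mem_univ v) h)
    have hent : entropyOf p W = 0 := by
      simp only [entropyOf, H', neg_eq_zero]
      rw [Finset.sum_eq_single v (fun s _ hs => by simp [hdx s hs])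
        (fun h => absurd (Finset.mem_univ v) h)]
      simp [hdv]
    rw [hent]
    simp [binEnt]
  · -- ε > 0 case
    have h1ε : (0:ℝ) < 1 - ε := by linarith
    set q : (Fin k → Bool) → ℝ :=
      fun x => ε ^ (hammingDist x v) * (1 - ε) ^ (k - hammingDist x v) with hqdef
    have hqpos : ∀ x, 0 < q x := fun x => by positivity
    have hDle : ∀ x : Fin k → Bool, hammingDist x v ≤ k := fun x => by
      simpa using (hammingDist_le_card_fintype (x := x) (y := v))
    have hqprod : ∀ x : Fin k → Bool,
        q x = ∏ i, (if x i = v i then (1 - ε) else ε) := by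
      intro x
      rw [Finset.prod_ite, Finset.prod_const, Finset.prod_const]
      have hcard : #{i : Fin k | ¬ x i = v i} = hammingDist x v := by
        simp [hammingDist, Ne]
      have hcard2 : #{i : Fin k | x i = v i} = k - hammingDist x v := by
        have h := Finset.card_filter_add_card_filter_not
          (s := (Finset.univ : Finset (Fin k))) (p := fun i => x i = v i)
        rw [hcard] at h
        simp at h
        omega
      rw [hcard, hcard2, hqdef, mul_comm]
    have hq1 : ∑ x, q x = 1 := by
      have h := Fintype.prod_sum (fun (i : Fin k) (b : Bool) => if b = v i then (1 - ε) else ε)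
      have h2 : ∀ i : Fin k, ∑ b : Bool, (if b = v i then (1 - ε) else ε) = 1 := by
        intro i; cases hvi : v i <;> simp [Fintype.sum_bool, hvi]
      rw [Finset.prod_congr rfl (fun i _ => h2 i), Finset.prod_const_one] at h
      rw [Finset.sum_congr rfl (fun x _ => hqprod x), ← h]
    have hlogq : ∀ x : Fin k → Bool, Real.logb 2 (q x)
        = (hammingDist x v : ℝ) * Real.logb 2 ε
          + ((k : ℝ) - (hammingDist x v : ℝ)) * Real.logb 2 (1 - ε) := by
      intro x
      rw [hqdef]
      rw [Real.logb_mul (by positivity) (by positivity), Real.logb_pow, Real.logb_pow]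
      rw [Nat.cast_sub (hDle x)]
    -- Gibbs
    have hg := gibbs (distOf p W) q hdnn hd1 hqpos hq1.le
    have hcross : -∑ x, distOf p W x * Real.logb 2 (q x)
        = (Real.logb 2 (1 - ε) - Real.logb 2 ε) * (∑ ω, p ω * (hammingDist (W ω) v : ℝ))
          - (k : ℝ) * Real.logb 2 (1 - ε) := by
      rw [expect_eq p W (fun x => Real.logb 2 (q x))]
      have h : ∀ ω, p ω * Real.logb 2 (q (W ω))
          = (Real.logb 2 ε - Real.logb 2 (1 - ε)) * (p ω * (hammingDist (W ω) v : ℝ))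
            + (k : ℝ) * Real.logb 2 (1 - ε) * p ω := by
        intro ω; rw [hlogq]; ring
      rw [Finset.sum_congr rfl (fun ω _ => h ω), Finset.sum_add_distrib,
        ← Finset.mul_sum, ← Finset.mul_sum, hsum]
      ring
    have hba : 0 ≤ Real.logb 2 (1 - ε) - Real.logb 2 ε := by
      have := Real.logb_le_logb_of_le (b := 2) one_lt_two hε (by linarith : ε ≤ 1 - ε)
      linarith
    have hfinal : (Real.logb 2 (1 - ε) - Real.logb 2 ε) * (∑ ω, p ω * (hammingDist (W ω) v : ℝ))
          - (k : ℝ) * Real.logb 2 (1 - ε) ≤ (k : ℝ) * binEnt ε := by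
      have h1 : (Real.logb 2 (1 - ε) - Real.logb 2 ε) * (∑ ω, p ω * (hammingDist (W ω) v : ℝ))
          ≤ (Real.logb 2 (1 - ε) - Real.logb 2 ε) * (ε * k) :=
        mul_le_mul_of_nonneg_left hdist hba
      have h2 : (Real.logb 2 (1 - ε) - Real.logb 2 ε) * (ε * k)
          - (k : ℝ) * Real.logb 2 (1 - ε) = (k : ℝ) * binEnt ε := by
        simp only [binEnt]; ring
      linarith
    calc entropyOf p W ≤ -∑ x, distOf p W x * Real.logb 2 (q x) := hg
      _ ≤ (k : ℝ) * binEnt ε := by rw [hcross]; exact hfinal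

/-- Generalized Fano inequality: if `E[d_H(W, v)] ≤ ε·k` with `0 ≤ ε ≤ 1/2`,
then `H(W) ≤ k · H₂(ε)`. -/
theorem stmt3 (k : ℕ) (p : Ω → ℝ) (hp : ∀ ω, 0 ≤ p ω) (hsum : ∑ ω, p ω = 1)
    (W : Ω → (Fin k → Bool)) (v : Fin k → Bool) (ε : ℝ)
    (hε0 : 0 ≤ ε) (hεhalf : ε ≤ 1 / 2)
    (hdist : ∑ ω, p ω * (hammingDist (W ω) v : ℝ) ≤ ε * k) :
    entropyOf p W ≤ k * binEnt ε :=
  stmt3' k p hp hsum W v ε hε0 hεhalf hdist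
end

section
/- Entropy drop from low-error linear predictions: Let Z be a random variable on {0,1}^{n₀}. Let A be a set of pairs (i,j) with i ≠ j, |A| = a, such that the corresponding XOR functionals {z ↦ z_i ⊕ z_j : (i,j) ∈ A} are linearly independent over 𝔽₂ (e.g., A forms a forest on vertex set [n₀]). Suppose there is a fixed vector v ∈ {0,1}^A with E[d_H(u_Z, v)] ≤ a/4, where u_Z = (Z_i ⊕ Z_j)_{(i,j) ∈ A}. Then H(Z) ≤ a·H₂(1/4) + (n₀ - a). -/
set_option linter.unusedSectionVars false
set_option linter.unusedVariables false
set_option maxHeartbeats 1000000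


open Finset

variable {Ω : Type*} [Fintype Ω]

section Aux

variable {S : Type*} [Fintype S] [DecidableEq S] {p : Ω → ℝ}

lemma distOf_nonneg (hp : ∀ ω, 0 ≤ p ω) (X : Ω → S) (s : S) : 0 ≤ distOf p X s :=
  Finset.sum_nonneg fun ω _ => by by_cases h : X ω = s <;> simp [distOf, h, hp ω]

lemma sum_distOf (X : Ω → S) : ∑ s, distOf p X s = ∑ ω, p ω := by
  unfold distOf
  rw [Finset.sum_comm]
  exact Finset.sum_congr rfl fun ω _ => by simp

lemma gibbs_log (p q : S → ℝ) (hp : ∀ s, 0 ≤ p s) (hq : ∀ s, 0 ≤ q s)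
    (hpq : ∀ s, p s ≠ 0 → q s ≠ 0) (hq1 : ∑ s, q s ≤ 1) (hp1 : ∑ s, p s = 1) :
    ∑ s, p s * (Real.log (q s) - Real.log (p s)) ≤ 0 := by
  calc ∑ s, p s * (Real.log (q s) - Real.log (p s)) ≤ ∑ s, (q s - p s) := by
        apply Finset.sum_le_sum; intro s _
        rcases eq_or_lt_of_le (hp s) with h | h
        · simp only [← h, zero_mul, sub_zero]; exact hq s
        · have hqs : 0 < q s := lt_of_le_of_ne (hq s) (Ne.symm (hpq s (ne_of_gt h)))
          have hlog := Real.log_le_sub_one_of_pos (div_pos hqs h)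
          rw [Real.log_div (ne_of_gt hqs) (ne_of_gt h)] at hlog
          have h2 := mul_le_mul_of_nonneg_left hlog (le_of_lt h)
          calc p s * (Real.log (q s) - Real.log (p s)) ≤ p s * (q s / p s - 1) := h2
            _ = q s - p s := by field_simp
    _ ≤ 0 := by rw [Finset.sum_sub_distrib, hp1]; linarith

lemma gibbs_s9 (p q : S → ℝ) (hp : ∀ s, 0 ≤ p s) (hq : ∀ s, 0 ≤ q s)
    (hpq : ∀ s, p s ≠ 0 → q s ≠ 0) (hq1 : ∑ s, q s ≤ 1) (hp1 : ∑ s, p s = 1) :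
    -∑ s, p s * Real.logb 2 (p s) ≤ -∑ s, p s * Real.logb 2 (q s) := by
  have h2 : (0:ℝ) < Real.log 2 := Real.log_pos one_lt_two
  have hg := gibbs_log p q hp hq hpq hq1 hp1
  have key : ∑ s, p s * Real.logb 2 (q s) - ∑ s, p s * Real.logb 2 (p s)
      = (∑ s, p s * (Real.log (q s) - Real.log (p s))) / Real.log 2 := by
    rw [Finset.sum_div, ← Finset.sum_sub_distrib]
    refine Finset.sum_congr rfl fun s _ => ?_
    rw [Real.logb, Real.logb]; field_simp
  have hle : ∑ s, p s * Real.logb 2 (q s) - ∑ s, p s * Real.logb 2 (p s) ≤ 0 := by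
    rw [key]; exact div_nonpos_of_nonpos_of_nonneg hg h2.le
  linarith

lemma entropyOf_comp {T : Type*} [Fintype T] [DecidableEq T] {f : S → T}
    (hf : Function.Injective f) (X : Ω → S) :
    entropyOf p (fun ω => f (X ω)) = entropyOf p X := by
  have hdist : ∀ s, distOf p (fun ω => f (X ω)) (f s) = distOf p X s := by
    intro s; unfold distOf
    exact Finset.sum_congr rfl fun ω _ => by simp [hf.eq_iff]
  have hzero : ∀ t ∉ Finset.image f Finset.univ, distOf p (fun ω => f (X ω)) t = 0 := by
    intro t ht
    unfold distOf
    refine Finset.sum_eq_zero fun ω _ => ?_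
    have : f (X ω) ≠ t := fun h => ht (by simpa using ⟨X ω, h⟩)
    simp [this]
  unfold entropyOf H'
  congr 1
  rw [← Finset.sum_subset (Finset.subset_univ (Finset.image f Finset.univ))
    (fun t _ ht => by rw [hzero t ht]; simp)]
  rw [Finset.sum_image (fun a _ b _ h => hf h)]
  exact Finset.sum_congr rfl fun s _ => by rw [hdist]

lemma entropyOf_le_logb_card (hp : ∀ ω, 0 ≤ p ω) (hsum : ∑ ω, p ω = 1) (X : Ω → S) :
    entropyOf p X ≤ Real.logb 2 (Fintype.card S) := by
  have hΩ : Nonempty Ω := by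
    by_contra h
    rw [not_nonempty_iff] at h
    rw [Finset.univ_eq_empty, Finset.sum_empty] at hsum; norm_num at hsum
  have hS : Nonempty S := ⟨X (Classical.arbitrary Ω)⟩
  have hcard : 0 < (Fintype.card S : ℝ) := by exact_mod_cast Fintype.card_pos
  have hd1 : ∑ s, distOf p X s = 1 := by rw [sum_distOf, hsum]
  have hgb := gibbs_s9 (distOf p X) (fun _ => (Fintype.card S : ℝ)⁻¹) (distOf_nonneg hp X)
    (fun s => by positivity) (fun s _ => by positivity)
    (le_of_eq (by
      rw [Finset.sum_const, Finset.card_univ, nsmul_eq_mul, mul_inv_cancel₀ (ne_of_gt hcard)]))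
    hd1
  calc entropyOf p X ≤ -∑ s, distOf p X s * Real.logb 2 ((Fintype.card S : ℝ)⁻¹) := hgb
    _ = Real.logb 2 (Fintype.card S) := by
        rw [← Finset.sum_mul, hd1, one_mul, Real.logb_inv, neg_neg]

/-- Subadditivity of entropy for a Bool-vector-valued random variable. -/
lemma entropyOf_pi_le {ι : Type*} [Fintype ι] [DecidableEq ι]
    (hp : ∀ ω, 0 ≤ p ω) (hsum : ∑ ω, p ω = 1) (W : Ω → (ι → Bool)) :
    entropyOf p W ≤ ∑ i, entropyOf p (fun ω => W ω i) := by
  set r := distOf p W with hr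
  set d := fun (i : ι) (b : Bool) => distOf p (fun ω => W ω i) b with hd
  have hmarg : ∀ (i : ι) (b : Bool), ∑ w : ι → Bool, (if w i = b then r w else 0) = d i b := by
    intro i b
    simp only [hr, hd]; unfold distOf
    have h1 : ∀ w : ι → Bool, (if w i = b then ∑ ω, (if W ω = w then p ω else 0) else 0)
        = ∑ ω, (if W ω = w then (if w i = b then p ω else 0) else 0) := by
      intro w
      by_cases h : w i = b
      · simp [h]
      · simp [h]
    rw [Finset.sum_congr rfl fun w _ => h1 w, Finset.sum_comm]
    refine Finset.sum_congr rfl fun ω _ => ?_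
    rw [Finset.sum_ite_eq]
    simp
  have hrnn : ∀ w, 0 ≤ r w := fun w => distOf_nonneg hp W w
  have hrle : ∀ (w : ι → Bool) (i : ι), r w ≤ d i (w i) := by
    intro w i
    have h0 : ∀ w' : ι → Bool, (0:ℝ) ≤ (if w' i = w i then r w' else 0) := fun w' => by
      by_cases h : w' i = w i <;> simp [h, hrnn w']
    have hs := Finset.single_le_sum (fun w' (_ : w' ∈ Finset.univ) => h0 w') (Finset.mem_univ w)
    rw [hmarg i (w i)] at hs
    simpa using hs
  set q := fun w : ι → Bool => ∏ i, d i (w i) with hq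
  have hqnn : ∀ w, 0 ≤ q w := fun w => Finset.prod_nonneg fun i _ => distOf_nonneg hp _ _
  have hr1 : ∑ w, r w = 1 := by rw [hr, sum_distOf, hsum]
  have hd1 : ∀ i, ∑ b, d i b = 1 := fun i => by rw [hd]; rw [sum_distOf, hsum]
  have hq1 : ∑ w, q w = 1 := by
    simp only [hq]
    rw [← Fintype.prod_sum]
    exact Finset.prod_eq_one fun i _ => hd1 i
  have hrq : ∀ w, r w ≠ 0 → q w ≠ 0 := by
    intro w hw
    have hpos : 0 < r w := (hrnn w).lt_of_ne (Ne.symm hw)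
    exact ne_of_gt (Finset.prod_pos fun i _ => lt_of_lt_of_le hpos (hrle w i))
  have hgibbs := gibbs_s9 r q hrnn hqnn hrq hq1.le hr1
  have hstep : -∑ w, r w * Real.logb 2 (q w) = ∑ i, entropyOf p (fun ω => W ω i) := by
    have hpt : ∀ w, r w * Real.logb 2 (q w) = ∑ i, r w * Real.logb 2 (d i (w i)) := by
      intro w
      by_cases hw : r w = 0
      · simp [hw]
      · rw [← Finset.mul_sum]
        congr 1
        simp only [hq, Real.logb]
        rw [Real.log_prod (fun i _ => ne_of_gt (lt_of_lt_of_le ((hrnn w).lt_of_ne (Ne.symm hw)) (hrle w i)))]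
        rw [Finset.sum_div]
    rw [Finset.sum_congr rfl fun w _ => hpt w, Finset.sum_comm, ← Finset.sum_neg_distrib]
    refine Finset.sum_congr rfl fun i _ => ?_
    unfold entropyOf H'
    congr 1
    have h1 : ∀ w : ι → Bool, r w * Real.logb 2 (d i (w i))
        = ∑ b, (if w i = b then r w else 0) * Real.logb 2 (d i b) := by
      intro w
      rw [show (∑ b, (if w i = b then r w else 0) * Real.logb 2 (d i b))
          = ∑ b, (if w i = b then r w * Real.logb 2 (d i b) else 0) from
        Finset.sum_congr rfl fun b _ => by by_cases h : w i = b <;> simp [h]]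
      rw [Finset.sum_ite_eq]
      simp
    rw [Finset.sum_congr rfl fun w _ => h1 w, Finset.sum_comm]
    refine Finset.sum_congr rfl fun b _ => ?_
    rw [← Finset.sum_mul, hmarg]
  calc entropyOf p W ≤ -∑ w, r w * Real.logb 2 (q w) := hgibbs
    _ = ∑ i, entropyOf p (fun ω => W ω i) := hstep

/-- Subadditivity of entropy for a pair. -/
lemma entropyOf_pair_le {T : Type*} [Fintype T] [DecidableEq T]
    (hp : ∀ ω, 0 ≤ p ω) (hsum : ∑ ω, p ω = 1) (X : Ω → S) (Y : Ω → T) :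
    entropyOf p (fun ω => (X ω, Y ω)) ≤ entropyOf p X + entropyOf p Y := by
  set r := distOf p (fun ω => (X ω, Y ω)) with hr
  set dX := distOf p X with hdX
  set dY := distOf p Y with hdY
  have hrnn : ∀ st, 0 ≤ r st := fun st => distOf_nonneg hp _ st
  have hmargX : ∀ s, ∑ t, r (s, t) = dX s := by
    intro s; simp only [hr, hdX]; unfold distOf
    rw [Finset.sum_comm]
    refine Finset.sum_congr rfl fun ω _ => ?_
    by_cases h : X ω = s
    · simp [Prod.ext_iff, h]
    · simp [Prod.ext_iff, h]
  have hmargY : ∀ t, ∑ s, r (s, t) = dY t := by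
    intro t; simp only [hr, hdY]; unfold distOf
    rw [Finset.sum_comm]
    refine Finset.sum_congr rfl fun ω _ => ?_
    by_cases h : Y ω = t
    · simp [Prod.ext_iff, h]
    · simp [Prod.ext_iff, h]
  have hrleX : ∀ s t, r (s, t) ≤ dX s := by
    intro s t; rw [← hmargX s]
    exact Finset.single_le_sum (fun t' _ => hrnn (s, t')) (Finset.mem_univ t)
  have hrleY : ∀ s t, r (s, t) ≤ dY t := by
    intro s t; rw [← hmargY t]
    exact Finset.single_le_sum (fun s' _ => hrnn (s', t)) (Finset.mem_univ s)
  have hr1 : ∑ st : S × T, r st = 1 := by rw [hr, sum_distOf, hsum]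
  set q := fun st : S × T => dX st.1 * dY st.2 with hq
  have hqnn : ∀ st, 0 ≤ q st := fun st =>
    mul_nonneg (distOf_nonneg hp _ _) (distOf_nonneg hp _ _)
  have hq1 : ∑ st : S × T, q st = 1 := by
    simp only [hq]
    rw [Fintype.sum_prod_type]
    calc ∑ s, ∑ t, dX s * dY t = ∑ s, dX s * ∑ t, dY t := by
          exact Finset.sum_congr rfl fun s _ => (Finset.mul_sum _ _ _).symm
      _ = 1 := by
          rw [hdY, sum_distOf, hsum]
          simp only [mul_one]
          rw [hdX, sum_distOf, hsum]
  have hrq : ∀ st, r st ≠ 0 → q st ≠ 0 := by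
    intro st hst
    have hpos : 0 < r st := (hrnn st).lt_of_ne (Ne.symm hst)
    exact ne_of_gt (mul_pos (lt_of_lt_of_le hpos (hrleX st.1 st.2))
      (lt_of_lt_of_le hpos (hrleY st.1 st.2)))
  have hgibbs := gibbs_s9 r q hrnn hqnn hrq hq1.le hr1
  have hstep : -∑ st : S × T, r st * Real.logb 2 (q st)
      = entropyOf p X + entropyOf p Y := by
    have hpt : ∀ st : S × T, r st * Real.logb 2 (q st)
        = r st * Real.logb 2 (dX st.1) + r st * Real.logb 2 (dY st.2) := by
      intro st
      by_cases hst : r st = 0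
      · simp [hst]
      · have hpos : 0 < r st := (hrnn st).lt_of_ne (Ne.symm hst)
        rw [← mul_add]
        congr 1
        exact Real.logb_mul (ne_of_gt (lt_of_lt_of_le hpos (hrleX st.1 st.2)))
          (ne_of_gt (lt_of_lt_of_le hpos (hrleY st.1 st.2)))
    rw [Finset.sum_congr rfl fun st _ => hpt st, Finset.sum_add_distrib, neg_add]
    congr 1
    · unfold entropyOf H'
      congr 1
      simp only [Fintype.sum_prod_type]
      refine Finset.sum_congr rfl fun s _ => ?_
      rw [← Finset.sum_mul, hmargX]
    · unfold entropyOf H'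
      congr 1
      simp only [Fintype.sum_prod_type_right]
      refine Finset.sum_congr rfl fun t _ => ?_
      rw [← Finset.sum_mul, hmargY]
  calc entropyOf p (fun ω => (X ω, Y ω)) ≤ -∑ st : S × T, r st * Real.logb 2 (q st) := hgibbs
    _ = entropyOf p X + entropyOf p Y := hstep

/-- Entropy of a Bool random variable is the binary entropy of either point mass. -/
lemma entropyOf_bool_eq (hsum : ∑ ω, p ω = 1) (X : Ω → Bool) (b : Bool) :
    entropyOf p X = binEnt (distOf p X b) := by
  have h1 : distOf p X true + distOf p X false = 1 := by
    have h := sum_distOf (p := p) X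
    rw [hsum] at h
    simpa [Fintype.sum_bool] using h
  cases b
  · unfold entropyOf H' binEnt
    rw [Fintype.sum_bool]
    have h2 : distOf p X true = 1 - distOf p X false := by linarith
    rw [h2]; ring
  · unfold entropyOf H' binEnt
    rw [Fintype.sum_bool]
    have h2 : distOf p X false = 1 - distOf p X true := by linarith
    rw [h2]; ring

lemma binEnt_eq (x : ℝ) : binEnt x = Real.binEntropy x / Real.log 2 := by
  unfold binEnt Real.binEntropy
  rw [Real.log_inv, Real.log_inv, Real.logb, Real.logb]; ring

/-- Jensen + monotonicity step for binary entropy. -/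
lemma sum_binEnt_le {ι : Type*} [Fintype ι] (α : ι → ℝ) (h0 : ∀ i, 0 ≤ α i) (h1 : ∀ i, α i ≤ 1)
    (ha : ∑ i, α i ≤ (Fintype.card ι : ℝ) / 4) :
    ∑ i, binEnt (α i) ≤ (Fintype.card ι : ℝ) * binEnt (1/4) := by
  rcases isEmpty_or_nonempty ι with hι | hι
  · simp
  · have hn : 0 < (Fintype.card ι : ℝ) := by exact_mod_cast Fintype.card_pos
    set n : ℝ := (Fintype.card ι : ℝ) with hne
    have hconc : ConcaveOn ℝ (Set.Icc (0:ℝ) 1) Real.binEntropy :=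
      Real.strictConcave_binEntropy.concaveOn
    have hj := hconc.le_map_sum (t := Finset.univ) (w := fun _ => n⁻¹) (p := α)
      (fun i _ => by positivity)
      (by rw [Finset.sum_const, Finset.card_univ, nsmul_eq_mul, ← hne]; field_simp)
      (fun i _ => ⟨h0 i, h1 i⟩)
    simp only [smul_eq_mul] at hj
    have hm4 : ∑ i, n⁻¹ * α i ≤ 1/4 := by
      rw [← Finset.mul_sum]
      calc n⁻¹ * ∑ i, α i ≤ n⁻¹ * (n / 4) :=
            mul_le_mul_of_nonneg_left ha (by positivity)
        _ = 1/4 := by field_simp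
    have hm0 : 0 ≤ ∑ i, n⁻¹ * α i :=
      Finset.sum_nonneg fun i _ => mul_nonneg (by positivity) (h0 i)
    have hmono : Real.binEntropy (∑ i, n⁻¹ * α i) ≤ Real.binEntropy (1/4) := by
      rcases eq_or_lt_of_le hm4 with h | h
      · rw [h]
      · exact le_of_lt (Real.binEntropy_strictMonoOn ⟨hm0, by linarith⟩
          ⟨by norm_num, by norm_num⟩ h)
    have hlog2 : (0:ℝ) < Real.log 2 := Real.log_pos one_lt_two
    have hkey : ∑ i, Real.binEntropy (α i) ≤ n * Real.binEntropy (1/4) := by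
      have h5 : ∑ i, n⁻¹ * Real.binEntropy (α i) ≤ Real.binEntropy (1/4) :=
        le_trans hj hmono
      rw [← Finset.mul_sum] at h5
      calc ∑ i, Real.binEntropy (α i) = n * (n⁻¹ * ∑ i, Real.binEntropy (α i)) := by
            field_simp
        _ ≤ n * Real.binEntropy (1/4) := mul_le_mul_of_nonneg_left h5 hn.le
    calc ∑ i, binEnt (α i) = (∑ i, Real.binEntropy (α i)) / Real.log 2 := by
          rw [Finset.sum_div]; exact Finset.sum_congr rfl fun i _ => binEnt_eq _
      _ ≤ (n * Real.binEntropy (1/4)) / Real.log 2 := by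
          apply div_le_div_of_nonneg_right hkey hlog2.le
      _ = n * binEnt (1/4) := by rw [binEnt_eq]; ring

end Aux

/-- Entropy drop from low-error linear predictions: if the XOR functionals indexed by
a set `A` of `a` pairs are linearly independent over `𝔽₂` and some fixed vector `v`
predicts the induced parities `u_Z` with expected Hamming error at most `a/4`,
then `H(Z) ≤ a·H₂(1/4) + (n₀ - a)`. -/
theorem stmt9 (n₀ : ℕ) (p : Ω → ℝ) (hp : ∀ ω, 0 ≤ p ω) (hsum : ∑ ω, p ω = 1)
    (Z : Ω → (Fin n₀ → Bool)) (A : Finset (Fin n₀ × Fin n₀)) (a : ℕ)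
    (hAcard : A.card = a) (hne : ∀ e ∈ A, e.1 ≠ e.2)
    (hli : LinearIndependent (ZMod 2)
      (fun e : A => fun z : Fin n₀ → ZMod 2 => z e.1.1 + z e.1.2))
    (v : A → Bool)
    (hdist : ∑ ω, p ω *
        (hammingDist (fun e : A => xor (Z ω e.1.1) (Z ω e.1.2)) v : ℝ) ≤ (a : ℝ) / 4) :
    entropyOf p Z ≤ (a : ℝ) * binEnt (1 / 4) + ((n₀ : ℝ) - (a : ℝ)) := by
  classical
  set toZ : Bool → ZMod 2 := fun b => if b then 1 else 0 with htoZ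
  have toZ_inj : Function.Injective toZ := by decide
  have toZ_xor : ∀ x y, toZ (xor x y) = toZ x + toZ y := by decide
  set M : Matrix A (Fin n₀) (ZMod 2) :=
    fun e k => (if k = e.1.1 then 1 else 0) + (if k = e.1.2 then 1 else 0) with hM
  set L := M.mulVecLin with hL
  have hLapp : ∀ z e, L z e = z e.1.1 + z e.1.2 := by
    intro z e
    show (∑ k, M e k * z k) = _
    simp only [hM, add_mul, ite_mul, one_mul, zero_mul, Finset.sum_add_distrib,
      Finset.sum_ite_eq' Finset.univ, Finset.mem_univ, if_true]
  -- injectivity of vecMul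
  have hinj : Function.Injective M.vecMulLinear := by
    rw [← LinearMap.ker_eq_bot, LinearMap.ker_eq_bot']
    intro c hc
    have hz : ∀ z : Fin n₀ → ZMod 2, ∑ e : A, c e * (z e.1.1 + z e.1.2) = 0 := by
      intro z
      have h1 : dotProduct c (M.mulVec z) = dotProduct (Matrix.vecMul c M) z :=
        Matrix.dotProduct_mulVec c M z
      have h2 : Matrix.vecMul c M = 0 := hc
      rw [h2, zero_dotProduct] at h1
      have h3 : dotProduct c (M.mulVec z) = ∑ e : A, c e * (z e.1.1 + z e.1.2) := by
        unfold dotProduct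
        refine Finset.sum_congr rfl fun e _ => ?_
        congr 1
        exact hLapp z e
      rw [← h3, h1]
    have hs0 : ∑ e : A, c e • (fun z : Fin n₀ → ZMod 2 => z e.1.1 + z e.1.2) = 0 := by
      funext z
      rw [Finset.sum_apply]
      simpa [smul_eq_mul] using hz z
    have hall := Fintype.linearIndependent_iff.mp hli c hs0
    funext e; exact hall e
  have hcardA : Fintype.card A = a := by rw [Fintype.card_coe, hAcard]
  have hrankT : Matrix.rank M.transpose = a := by
    rw [Matrix.rank, Matrix.mulVecLin_transpose, LinearMap.finrank_range_of_inj hinj,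
      Module.finrank_fintype_fun_eq_card, hcardA]
  have hrank : Matrix.rank M = a := by rw [← Matrix.rank_transpose]; exact hrankT
  have hsurj : Function.Surjective L := by
    rw [← LinearMap.range_eq_top]
    apply Submodule.eq_top_of_finrank_eq
    show Matrix.rank M = _
    rw [hrank, Module.finrank_fintype_fun_eq_card, hcardA]
  have hrn : Module.finrank (ZMod 2) (LinearMap.range L) = a := hrank
  have hranknull := LinearMap.finrank_range_add_finrank_ker L
  rw [hrn, Module.finrank_fintype_fun_eq_card, Fintype.card_fin] at hranknull
  have haled : a ≤ n₀ := by omega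
  have hkerdim : Module.finrank (ZMod 2) (LinearMap.ker L) = n₀ - a := by omega
  have hcardker : Fintype.card (LinearMap.ker L) = 2 ^ (n₀ - a) := by
    rw [Module.card_eq_pow_finrank (K := ZMod 2), hkerdim, ZMod.card]
  obtain ⟨Q, hQ⟩ := Submodule.exists_isCompl (LinearMap.ker L)
  set π := (LinearMap.ker L).linearProjOfIsCompl Q hQ with hπ
  have hginj : Function.Injective (fun z : Fin n₀ → ZMod 2 => (L z, π z)) := by
    intro x y hxy
    have h1 : L (x - y) = 0 := by
      rw [map_sub, sub_eq_zero]; exact congrArg Prod.fst hxy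
    have h2 : π (x - y) = 0 := by
      rw [map_sub, sub_eq_zero]; exact congrArg Prod.snd hxy
    have hmem : x - y ∈ LinearMap.ker L := h1
    have h3 : π (x - y) = ⟨x - y, hmem⟩ :=
      Submodule.linearProjOfIsCompl_apply_left hQ ⟨x - y, hmem⟩
    rw [h2] at h3
    have h4 : x - y = 0 := congrArg Subtype.val h3.symm
    have := sub_eq_zero.mp h4
    exact this
  -- the parity random variable
  set u : Ω → (A → Bool) := fun ω => fun e : A => xor (Z ω e.1.1) (Z ω e.1.2) with hu
  -- injective post-processing of Z
  have hFinj : Function.Injective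
      (fun zb : Fin n₀ → Bool => (L (fun k => toZ (zb k)), π (fun k => toZ (zb k)))) := by
    intro x y hxy
    have h1 := hginj hxy
    funext k
    exact toZ_inj (congrFun h1 k)
  have hA1 : entropyOf p Z
      = entropyOf p (fun ω => (L (fun k => toZ (Z ω k)), π (fun k => toZ (Z ω k)))) :=
    (entropyOf_comp hFinj Z).symm
  have hB : entropyOf p (fun ω => (L (fun k => toZ (Z ω k)), π (fun k => toZ (Z ω k))))
      ≤ entropyOf p (fun ω => L (fun k => toZ (Z ω k)))
        + entropyOf p (fun ω => π (fun k => toZ (Z ω k))) :=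
    entropyOf_pair_le hp hsum _ _
  have hC : entropyOf p (fun ω => π (fun k => toZ (Z ω k)))
      ≤ (n₀ : ℝ) - (a : ℝ) := by
    refine le_trans (entropyOf_le_logb_card hp hsum _) ?_
    rw [hcardker]
    push_cast
    rw [Real.logb_pow]
    rw [show Real.logb 2 2 = 1 from Real.logb_self_eq_one (by norm_num)]
    rw [mul_one, Nat.cast_sub haled]
  have hD : entropyOf p (fun ω => L (fun k => toZ (Z ω k))) = entropyOf p u := by
    have heq : (fun ω => L (fun k => toZ (Z ω k)))
        = fun ω => (fun w : A → Bool => fun e : A => toZ (w e)) (u ω) := by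
      funext ω
      funext e
      rw [hLapp]
      simp only [hu]
      exact (toZ_xor _ _).symm
    rw [heq]
    exact entropyOf_comp (f := fun w : A → Bool => fun e : A => toZ (w e))
      (fun x y hxy => funext fun e => toZ_inj (congrFun hxy e)) u
  let α : A → ℝ := fun e => distOf p (fun ω => u ω e) (!(v e))
  have hα : ∀ e : A, α e = distOf p (fun ω => u ω e) (!(v e)) := fun e => rfl
  have hα0 : ∀ e, 0 ≤ α e := fun e => distOf_nonneg hp _ _
  have hα1 : ∀ e : A, α e ≤ 1 := by
    intro e
    have h := sum_distOf (p := p) (fun ω => u ω e)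
    rw [hsum, Fintype.sum_bool] at h
    have h2 : (0:ℝ) ≤ distOf p (fun ω => u ω e) true := distOf_nonneg hp _ _
    have h3 : (0:ℝ) ≤ distOf p (fun ω => u ω e) false := distOf_nonneg hp _ _
    cases hv : (v e)
    · simp only [hα, hv, Bool.not_false]; linarith
    · simp only [hα, hv, Bool.not_true]; linarith
  have hαsum : ∑ e : A, α e ≤ (Fintype.card A : ℝ) / 4 := by
    rw [hcardA]
    calc ∑ e : A, α e = ∑ ω, p ω * (hammingDist (u ω) v : ℝ) := by
          simp only [hα]
          unfold distOf
          rw [Finset.sum_comm]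
          refine Finset.sum_congr rfl fun ω _ => ?_
          rw [hammingDist, Finset.card_filter]
          push_cast
          rw [Finset.mul_sum]
          refine Finset.sum_congr rfl fun e _ => ?_
          by_cases hue : u ω e = v e
          · simp [hue]
          · have h5 : u ω e = !(v e) := by
              revert hue; cases u ω e <;> cases v e <;> simp
            simp [h5, hue]
      _ ≤ (a : ℝ) / 4 := by simp only [hu]; exact hdist
  have hfinal : entropyOf p u ≤ (a : ℝ) * binEnt (1/4) := by
    calc entropyOf p u ≤ ∑ e : A, entropyOf p (fun ω => u ω e) := entropyOf_pi_le hp hsum u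
      _ = ∑ e : A, binEnt (α e) :=
          Finset.sum_congr rfl fun e _ => entropyOf_bool_eq hsum _ (!(v e))
      _ ≤ (Fintype.card A : ℝ) * binEnt (1/4) := sum_binEnt_le α hα0 hα1 hαsum
      _ = (a : ℝ) * binEnt (1/4) := by rw [hcardA]
  linarith [hA1, hB, hC, hD, hfinal]
end
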